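/- arXiv:2207.08992 — 2 statements merged into one kernel-verified Lean document; each statement's English description precedes it below -/
import Mathlib

section
/- For s > 0, the function f_s(z) = exp(s(z+1)/(z−1)) is not in the little Bloch space: for any fixed x₀ < 0, the sequence z_n = (x₀ + in + 1)/(x₀ + in − 1) lies in D, tends to 1, and (1 − |z_n|²)|f_s'(z_n)| → −2s x₀ e^{s x₀} > 0 as n → ∞. -/
open Complex Metric Filter

lemma fs_hasDerivAt (s : ℝ) (z : ℂ) (hz : z ≠ 1) :
    HasDerivAt (fun z : ℂ => Complex.exp ((s : ℂ) * (z + 1) / (z - 1)))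
      (Complex.exp ((s : ℂ) * (z + 1) / (z - 1)) * (-2 * s / (z - 1) ^ 2)) z := by
  have hz' : z - 1 ≠ 0 := sub_ne_zero.mpr hz
  have h1 : HasDerivAt (fun z : ℂ => (s : ℂ) * (z + 1)) (s : ℂ) z := by
    simpa using ((hasDerivAt_id z).add_const 1).const_mul (s : ℂ)
  have h2 : HasDerivAt (fun z : ℂ => z - 1) 1 z := (hasDerivAt_id z).sub_const 1
  have h3 := (h1.div h2 hz').cexp
  convert h3 using 1
  · rfl
  · rfl
  simp only [Pi.div_apply]
  ring

/-- For `s > 0`, `f_s(z) = exp(s(z+1)/(z−1))` is not in the little Bloch space: for fixed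
`x₀ < 0`, the points `z_n = (x₀ + in + 1)/(x₀ + in − 1)` lie in `𝔻`, tend to `1`, and
`(1 − |z_n|²)|f_s'(z_n)| → −2 s x₀ e^{s x₀} > 0`. -/
theorem exp_symbol_not_littleBloch (s : ℝ) (hs : 0 < s) (x₀ : ℝ) (hx₀ : x₀ < 0) :
    let zn : ℕ → ℂ := fun n => ((x₀ : ℂ) + n * Complex.I + 1) / ((x₀ : ℂ) + n * Complex.I - 1)
    (∀ n : ℕ, ‖zn n‖ < 1) ∧
      Tendsto zn atTop (nhds 1) ∧
      Tendsto (fun n : ℕ => (1 - ‖zn n‖ ^ 2) *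
          ‖deriv (fun z : ℂ => Complex.exp ((s : ℂ) * (z + 1) / (z - 1))) (zn n)‖)
        atTop (nhds (-2 * s * x₀ * Real.exp (s * x₀))) ∧
      0 < -2 * s * x₀ * Real.exp (s * x₀) := by
  intro zn
  set w : ℕ → ℂ := fun n => (x₀ : ℂ) + n * Complex.I with hw
  have hwsub : ∀ n, w n - 1 ≠ 0 := by
    intro n h
    have := congrArg Complex.re h
    simp [hw] at this
    linarith
  have hD : ∀ n : ℕ, (0:ℝ) < (x₀ - 1)^2 + (n:ℝ)^2 := by
    intro n
    have h1 : (0:ℝ) < (x₀ - 1)^2 := pow_two_pos_of_ne_zero (sub_ne_zero.mpr (ne_of_lt (by linarith)))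
    positivity
  have nsq1 : ∀ n : ℕ, Complex.normSq (w n + 1) = (x₀ + 1)^2 + (n:ℝ)^2 := by
    intro n; simp [hw, Complex.normSq_apply]; ring
  have nsq2 : ∀ n : ℕ, Complex.normSq (w n - 1) = (x₀ - 1)^2 + (n:ℝ)^2 := by
    intro n; simp [hw, Complex.normSq_apply]; ring
  have hnorm2 : ∀ n : ℕ, ‖zn n‖^2 = ((x₀ + 1)^2 + (n:ℝ)^2) / ((x₀ - 1)^2 + (n:ℝ)^2) := by
    intro n
    have : ‖zn n‖^2 = Complex.normSq (zn n) := Complex.sq_norm (zn n)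
    rw [this]
    show Complex.normSq ((w n + 1) / (w n - 1)) = _
    rw [map_div₀, nsq1, nsq2]
  have hlt : ∀ n : ℕ, ‖zn n‖ < 1 := by
    intro n
    have h2 : ‖zn n‖^2 < 1 := by
      rw [hnorm2 n, div_lt_one (hD n)]
      nlinarith [hD n]
    nlinarith [norm_nonneg (zn n)]
  refine ⟨hlt, ?_, ?_, by nlinarith [mul_pos (mul_pos hs (neg_pos.mpr hx₀)) (Real.exp_pos (s * x₀))]⟩
  · -- zn → 1
    have heq : ∀ n : ℕ, zn n = 1 + 2 / (w n - 1) := by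
      intro n
      show (w n + 1) / (w n - 1) = _
      field_simp [hwsub n]
      ring
    have h0 : Tendsto (fun n : ℕ => 2 / (w n - 1)) atTop (nhds 0) := by
      rw [tendsto_zero_iff_norm_tendsto_zero]
      apply squeeze_zero' (Eventually.of_forall fun n => norm_nonneg _)
        (g := fun n : ℕ => 2 / (n:ℝ)) ?_ (tendsto_const_div_atTop_nhds_zero_nat 2)
      filter_upwards [eventually_ge_atTop 1] with n hn
      have hn' : (0:ℝ) < n := by exact_mod_cast hn
      rw [norm_div]
      simp only [Complex.norm_ofNat]
      rw [div_le_div_iff₀ (norm_pos_iff.mpr (hwsub n)) hn']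
      have him : (n:ℝ) ≤ ‖w n - 1‖ := by
        calc (n:ℝ) = |(w n - 1).im| := by simp [hw]
        _ ≤ ‖w n - 1‖ := Complex.abs_im_le_norm _
      nlinarith [norm_nonneg (w n - 1)]
    have h1 := h0.const_add (1:ℂ)
    rw [show zn = fun n : ℕ => 1 + 2 / (w n - 1) from funext heq]
    simpa using h1
  · -- main limit : the sequence is constant
    have key : ∀ n : ℕ, (1 - ‖zn n‖ ^ 2) *
        ‖deriv (fun z : ℂ => Complex.exp ((s : ℂ) * (z + 1) / (z - 1))) (zn n)‖
        = -2 * s * x₀ * Real.exp (s * x₀) := by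
      intro n
      have hz1 : zn n ≠ 1 := by
        intro h
        have := (hlt n)
        rw [h] at this; simp at this
      have hd := (fs_hasDerivAt s (zn n) hz1).deriv
      rw [hd]
      have hzsub : zn n - 1 = 2 / (w n - 1) := by
        show (w n + 1) / (w n - 1) - 1 = _
        field_simp [hwsub n]
        ring
      have harg : (s : ℂ) * (zn n + 1) / (zn n - 1) = s * w n := by
        have hzadd : zn n + 1 = 2 * w n / (w n - 1) := by
          show (w n + 1) / (w n - 1) + 1 = _
          field_simp [hwsub n]; ring
        rw [hzadd, hzsub]
        field_simp [hwsub n]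
      rw [harg]
      have hder : (-2 * (s:ℂ) / (zn n - 1) ^ 2) = -(s:ℂ) * (w n - 1)^2 / 2 := by
        rw [hzsub]
        field_simp [hwsub n]
      rw [hder, norm_mul]
      have hexp : ‖Complex.exp ((s:ℂ) * w n)‖ = Real.exp (s * x₀) := by
        rw [Complex.norm_exp]
        congr 1
        simp [hw, Complex.mul_re]
      rw [hexp]
      have h2 : ‖-(s:ℂ) * (w n - 1)^2 / 2‖ = s * ((x₀ - 1)^2 + (n:ℝ)^2) / 2 := by
        rw [norm_div, norm_mul, norm_neg, norm_pow]
        have : ‖w n - 1‖^2 = Complex.normSq (w n - 1) := Complex.sq_norm _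
        rw [this, nsq2]
        simp [abs_of_pos hs]
      rw [h2, hnorm2]
      have hD' := (hD n).ne'
      field_simp
      ring
    rw [funext key]
    exact tendsto_const_nhds
end

section
/- Let φ be a parabolic automorphism of D with fixed point 1 of multiplicity 2, specifically φ = ψ₂ where ψ₂(z) = ((1−i)z − 1)/(z − i − 1), and for s ≥ 0 let f_s(z) = exp(s(z+1)/(z−1)). Then f_s ∘ ψ₂ = e^{2is} f_s on D. -/
open Complex Metric

/-- For the parabolic automorphism `ψ₂(z) = ((1−i)z − 1)/(z − i − 1)` and `s ≥ 0`,
the function `f_s(z) = exp(s(z+1)/(z−1))` satisfies `f_s ∘ ψ₂ = e^{2is} f_s` on `𝔻`. -/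
theorem parabolic_eigenfunction_psi2 (s : ℝ) (hs : 0 ≤ s) :
    ∀ z ∈ Metric.ball (0 : ℂ) 1,
      Complex.exp ((s : ℂ) *
          ((((1 - Complex.I) * z - 1) / (z - Complex.I - 1)) + 1) /
          ((((1 - Complex.I) * z - 1) / (z - Complex.I - 1)) - 1))
        = Complex.exp (2 * Complex.I * (s : ℂ)) *
            Complex.exp ((s : ℂ) * (z + 1) / (z - 1)) := by
  intro z hz
  rw [mem_ball, dist_zero_right] at hz
  have hz1 : z - 1 ≠ 0 := by
    intro h
    have : z = 1 := by linear_combination h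
    simp [this] at hz
  have hz2 : z - Complex.I - 1 ≠ 0 := by
    intro h
    have hzi : z = Complex.I + 1 := by linear_combination h
    rw [hzi] at hz
    rw [Complex.norm_def, Complex.normSq_apply] at hz
    simp at hz
    nlinarith [Real.sq_sqrt (by norm_num : (0:ℝ) ≤ 1 + 1), Real.sqrt_nonneg (1 + 1 : ℝ), hz]
  rw [← Complex.exp_add]
  congr 1
  have hnum : ((1 - Complex.I) * z - 1) / (z - Complex.I - 1) - 1 =
      (-Complex.I * (z - 1)) / (z - Complex.I - 1) := by
    field_simp
    ring
  rw [hnum]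
  have h3 : (-Complex.I * (z - 1)) / (z - Complex.I - 1) ≠ 0 := by
    apply div_ne_zero _ hz2
    simp [hz1, Complex.I_ne_zero]
  field_simp
  linear_combination (↑s * 2 - ↑s * z * 2) * Complex.I_sq
end
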